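/- Let a, b, δ, f, m₁, v be real numbers with b > 0, a + bδ > 0, f > 0, m₁ > δf > 0 or (δ = 0 and m₁ > 0), v > 0. Then (af + bm₁)² = b(2a + δb)·v^{-1} together with 2m₁f − δf² ≥ v^{-1} holds if and only if 2m₁f − δf² = v^{-1} and af = b(m₁ − δf). -/
import Mathlib


theorem stmt_15 (a b δ f m₁ v : ℝ) (hb : 0 < b) (habδ : 0 < a + b*δ)
    (hf : 0 < f) (hm : (m₁ > δ*f ∧ δ*f > 0) ∨ (δ = 0 ∧ m₁ > 0)) (hv : 0 < v) :
    ((a*f + b*m₁)^2 = b*(2*a + δ*b) * v⁻¹ ∧ 2*m₁*f - δ*f^2 ≥ v⁻¹) ↔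
      (2*m₁*f - δ*f^2 = v⁻¹ ∧ a*f = b*(m₁ - δ*f)) := by
  have hw : 0 < v⁻¹ := inv_pos.mpr hv
  have hδ0 : 0 ≤ δ := by
    rcases hm with ⟨h1, h2⟩ | ⟨h1, h2⟩
    · nlinarith
    · simp [h1]
  have hmδ : m₁ > δ*f := by
    rcases hm with ⟨h1, h2⟩ | ⟨h1, h2⟩
    · exact h1
    · simpa [h1] using h2
  have key : (a*f + b*m₁)^2
      = b*(2*a + δ*b)*(2*m₁*f - δ*f^2) + (a*f - b*(m₁ - δ*f))^2 := by ring
  constructor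
  · rintro ⟨heq, hge⟩
    have hpos : 0 < 2*a + δ*b := by
      rcases lt_trichotomy (2*a + δ*b) 0 with h | h | h
      · nlinarith [sq_nonneg (a*f + b*m₁), mul_pos hb hw]
      · have h0 : (a*f + b*m₁)^2 = 0 := by rw [heq, h]; ring
        have h1 : a*f + b*m₁ = 0 := by
          exact pow_eq_zero_iff (by norm_num) |>.mp h0
        nlinarith [mul_pos hb (show (0:ℝ) < 2*m₁ - δ*f by nlinarith)]
      · exact h
    have hbp := mul_pos hb hpos
    have hsq : (a*f - b*(m₁ - δ*f))^2 ≤ 0 := by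
      nlinarith [mul_nonneg hbp.le (show (0:ℝ) ≤ 2*m₁*f - δ*f^2 - v⁻¹ by linarith)]
    have hsq0 : a*f - b*(m₁ - δ*f) = 0 := by
      nlinarith [sq_nonneg (a*f - b*(m₁ - δ*f))]
    constructor
    · nlinarith
    · linarith
  · rintro ⟨h1, h2⟩
    refine ⟨?_, h1.ge⟩
    have h3 : a*f - b*(m₁ - δ*f) = 0 := by linarith
    rw [key, h3, h1]; ring
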